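/- Let m ≥ 1 and let p > m+2 satisfy 2^p ≡ x + 3·10^m (mod 10^(m+3)) for some x < 10^m (so the digit 3 at position m is followed by at least two zeros). Then for any k with 1 ≤ k ≤ 4 and p' = p + 4k·5^(m-1), writing 2^(p') ≡ x + b·10^m + a·10^(m+2) (mod 10^(m+3)) with 0 ≤ a, b ≤ 9, if b = 7 then a is odd. -/

import Mathlib

theorem stmt_13 (m p x k a b : ℕ) (hm : 1 ≤ m) (hp : m + 2 < p) (hx : x < 10 ^ m)
    (h3 : 2 ^ p ≡ x + 3 * 10 ^ m [MOD 10 ^ (m + 3)])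
    (hk1 : 1 ≤ k) (hk4 : k ≤ 4) (ha : a ≤ 9) (hbd : b ≤ 9)
    (h' : 2 ^ (p + 4 * k * 5 ^ (m - 1)) ≡ x + b * 10 ^ m + a * 10 ^ (m + 2)
      [MOD 10 ^ (m + 3)])
    (hb7 : b = 7) :
    a % 2 = 1 := by
  subst hb7
  have hd1 : (2:ℕ)^(m+3) ∣ 10^(m+3) := pow_dvd_pow_of_dvd (by norm_num) _
  have h3' := h3.of_dvd hd1
  have h'' := h'.of_dvd hd1
  have hz1 : (2:ℕ)^p ≡ 0 [MOD 2^(m+3)] :=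
    (Nat.modEq_zero_iff_dvd).mpr (pow_dvd_pow 2 (by omega))
  have hz2 : (2:ℕ)^(p+4*k*5^(m-1)) ≡ 0 [MOD 2^(m+3)] :=
    (Nat.modEq_zero_iff_dvd).mpr (pow_dvd_pow 2 (by omega))
  have key : (x + 3*10^m : ℕ) ≡ x + 7*10^m + a*10^(m+2) [MOD 2^(m+3)] :=
    (h3'.symm.trans hz1).trans (hz2.symm.trans h'')
  have hle : x + 3*10^m ≤ x + 7*10^m + a*10^(m+2) := by nlinarith [pow_pos (by norm_num : (0:ℕ) < 10) m, Nat.zero_le (a*10^(m+2))]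
  have hdvd : (2:ℕ)^(m+3) ∣ (x + 7*10^m + a*10^(m+2)) - (x + 3*10^m) :=
    (Nat.modEq_iff_dvd' hle).mp key
  have heq : (x + 7*10^m + a*10^(m+2)) - (x + 3*10^m) = 2^(m+2) * (5^m * (1 + 25*a)) := by
    have h10 : (10:ℕ)^m = 2^m * 5^m := by
      rw [show (10:ℕ) = 2*5 by norm_num, mul_pow]
    apply Nat.sub_eq_of_eq_add
    rw [h10, pow_add, pow_add, h10]; ring
  rw [heq, show m+3 = (m+2)+1 from rfl, pow_succ] at hdvd
  have h2 : 2 ∣ 5^m * (1 + 25*a) :=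
    (mul_dvd_mul_iff_left (pow_ne_zero (m+2) (two_ne_zero))).mp hdvd
  rcases (Nat.Prime.dvd_mul Nat.prime_two).mp h2 with h | h
  · exact absurd (Nat.Prime.dvd_of_dvd_pow Nat.prime_two h) (by norm_num)
  · omega
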